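/- Let G be a finite simple graph on a vertex type V, let v ∈ V, and let G' be the graph obtained from G by copying the vertex v: G' has vertex set V ⊕ Unit, where vertices coming from V are adjacent in G' iff they are adjacent in G, and the new vertex ⋆ is adjacent in G' exactly to the neighbors of v in G (and is not adjacent to v). If G is ħ-perfect, then G' is ħ-perfect. -/

import Mathlib

open Matrix

/-- A realization of the graph `G` in dimension `d`: a family of Hermitian involutions that
anticommute on edges and commute on non-edges. -/
def IsRealization {V : Type*} (G : SimpleGraph V) (d : ℕ)
    (S : V → Matrix (Fin d) (Fin d) ℂ) : Prop :=
  (∀ i, (S i).IsHermitian) ∧ (∀ i, S i * S i = 1) ∧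
    (∀ i j, G.Adj i j → S i * S j = -(S j * S i)) ∧
    (∀ i j, i ≠ j → ¬G.Adj i j → S i * S j = S j * S i)

/-- The (real) expectation value `ψᴴ A ψ` of a matrix `A` at a vector `ψ`. -/
noncomputable def expectation {d : ℕ} (A : Matrix (Fin d) (Fin d) ℂ) (ψ : Fin d → ℂ) : ℝ :=
  (star ψ ⬝ᵥ (A *ᵥ ψ)).re

/-- The beta value of a realization: supremum over unit vectors of the weighted sum of squared
expectations. -/
noncomputable def betaVal {V : Type*} [Fintype V] {d : ℕ}
    (S : V → Matrix (Fin d) (Fin d) ℂ) (w : V → ℝ) : ℝ :=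
  sSup {r : ℝ | ∃ ψ : Fin d → ℂ, star ψ ⬝ᵥ ψ = 1 ∧
    r = ∑ i, w i * (expectation (S i) ψ) ^ 2}

/-- A finite set of vertices is independent if no two of its members are adjacent. -/
def IsIndepSet {V : Type*} (G : SimpleGraph V) (I : Finset V) : Prop :=
  ∀ a ∈ I, ∀ b ∈ I, ¬G.Adj a b

/-- The weighted independence number. -/
noncomputable def alphaW {V : Type*} [Fintype V] (G : SimpleGraph V) (w : V → ℝ) : ℝ :=
  sSup {r : ℝ | ∃ I : Finset V, IsIndepSet G I ∧ r = ∑ i ∈ I, w i}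

/-- A graph is ħ-perfect if for every realization and every nonnegative weight vector the beta
value equals the weighted independence number. -/
def HbarPerfect {V : Type*} [Fintype V] (G : SimpleGraph V) : Prop :=
  ∀ d : ℕ, 1 ≤ d → ∀ S : V → Matrix (Fin d) (Fin d) ℂ, IsRealization G d S →
    ∀ w : V → ℝ, (∀ i, 0 ≤ w i) → betaVal S w = alphaW G w

/-! ### Auxiliary lemmas -/

lemma star_dot_self_aux {d : ℕ} (ψ : Fin d → ℂ) :
    star ψ ⬝ᵥ ψ = ((∑ i, Complex.normSq (ψ i) : ℝ) : ℂ) := by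
  simp [dotProduct, Complex.normSq_eq_conj_mul_self]

lemma normalize_vec_aux {d : ℕ} {ψ : Fin d → ℂ} (hψ : ψ ≠ 0) :
    ∃ c : ℝ, 0 < c ∧ star ((c:ℂ) • ψ) ⬝ᵥ ((c:ℂ) • ψ) = 1 := by
  set t : ℝ := ∑ i, Complex.normSq (ψ i) with ht
  have htpos : 0 < t := by
    obtain ⟨i, hi⟩ := Function.ne_iff.1 hψ
    refine Finset.sum_pos' (fun j _ => Complex.normSq_nonneg _) ⟨i, Finset.mem_univ i, ?_⟩
    simpa [Complex.normSq_pos] using hi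
  refine ⟨(Real.sqrt t)⁻¹, by positivity, ?_⟩
  have hst : Real.sqrt t ≠ 0 := by positivity
  rw [star_smul, smul_dotProduct, dotProduct_smul, star_dot_self_aux, ← ht]
  rw [smul_eq_mul, smul_eq_mul]
  rw [RCLike.star_def, Complex.conj_ofReal]
  norm_cast
  have h2 : Real.sqrt t * Real.sqrt t = t := Real.mul_self_sqrt htpos.le
  field_simp
  rw [Real.sq_sqrt htpos.le]

lemma exists_unit_vec_aux {d : ℕ} (hd : 1 ≤ d) :
    ∃ ψ : Fin d → ℂ, star ψ ⬝ᵥ ψ = 1 := by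
  have h0 : (Pi.single (⟨0, hd⟩ : Fin d) 1 : Fin d → ℂ) ≠ 0 := by
    intro h
    have := congrFun h ⟨0, hd⟩
    simp [Pi.single_apply] at this
  obtain ⟨c, _, hc⟩ := normalize_vec_aux h0
  exact ⟨_, hc⟩

lemma expectation_sq_le_one_aux {d : ℕ} {A : Matrix (Fin d) (Fin d) ℂ} (hA : A.IsHermitian)
    (hA2 : A * A = 1) {ψ : Fin d → ℂ} (hψ : star ψ ⬝ᵥ ψ = 1) :
    (expectation A ψ)^2 ≤ 1 := by
  set Ψ : EuclideanSpace ℂ (Fin d) := (WithLp.equiv 2 _).symm ψ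
  set Φ : EuclideanSpace ℂ (Fin d) := (WithLp.equiv 2 _).symm (A *ᵥ ψ)
  have hinner : (inner ℂ Ψ Φ : ℂ) = star ψ ⬝ᵥ (A *ᵥ ψ) := by rw [dotProduct_comm]; rfl
  have hd2 : star (A *ᵥ ψ) ⬝ᵥ (A *ᵥ ψ) = 1 := by
    rw [star_mulVec, ← dotProduct_mulVec, mulVec_mulVec, hA.eq, hA2, one_mulVec, hψ]
  have hΨ : ‖Ψ‖ = 1 := by
    have := norm_sq_eq_re_inner (𝕜 := ℂ) Ψ
    rw [show (inner ℂ Ψ Ψ : ℂ) = star ψ ⬝ᵥ ψ by rw [dotProduct_comm]; rfl, hψ] at this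
    simp at this
    rcases this with h | h
    · exact h
    · linarith [norm_nonneg Ψ]
  have hΦ : ‖Φ‖ = 1 := by
    have := norm_sq_eq_re_inner (𝕜 := ℂ) Φ
    rw [show (inner ℂ Φ Φ : ℂ) = star (A *ᵥ ψ) ⬝ᵥ (A *ᵥ ψ) by rw [dotProduct_comm]; rfl, hd2] at this
    simp at this
    rcases this with h | h
    · exact h
    · linarith [norm_nonneg Φ]
  have hcs := norm_inner_le_norm (𝕜 := ℂ) Ψ Φ
  rw [hΨ, hΦ, hinner] at hcs
  have hre : |(star ψ ⬝ᵥ (A *ᵥ ψ)).re| ≤ ‖star ψ ⬝ᵥ (A *ᵥ ψ)‖ := Complex.abs_re_le_norm _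
  have habs : |(expectation A ψ)| ≤ 1 := by
    unfold expectation
    calc |(star ψ ⬝ᵥ (A *ᵥ ψ)).re| ≤ ‖star ψ ⬝ᵥ (A *ᵥ ψ)‖ := hre
    _ ≤ 1 := by simpa using hcs
  exact (sq_le_one_iff_abs_le_one _).2 habs

lemma common_eigvec_aux {d : ℕ} (hd : 1 ≤ d) {α : Type*} [DecidableEq α]
    (S : α → Matrix (Fin d) (Fin d) ℂ) (I : Finset α)
    (hinv : ∀ x ∈ I, S x * S x = 1)
    (hcomm : ∀ x ∈ I, ∀ y ∈ I, S x * S y = S y * S x) :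
    ∃ ψ : Fin d → ℂ, ψ ≠ 0 ∧ ∀ x ∈ I, S x *ᵥ ψ = ψ ∨ S x *ᵥ ψ = -ψ := by
  induction I using Finset.induction with
  | empty =>
    refine ⟨Pi.single ⟨0, hd⟩ 1, ?_, by simp⟩
    intro h
    have := congrFun h ⟨0, hd⟩
    simp [Pi.single_apply] at this
  | @insert j I hj ih =>
    obtain ⟨ψ, hψ0, hψ⟩ := ih (fun x hx => hinv x (Finset.mem_insert_of_mem hx))
      (fun x hx y hy => hcomm x (Finset.mem_insert_of_mem hx) y (Finset.mem_insert_of_mem hy))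
    by_cases hneg : S j *ᵥ ψ = -ψ
    · exact ⟨ψ, hψ0, fun x hx => by
        rcases Finset.mem_insert.1 hx with rfl | hx
        · exact Or.inr hneg
        · exact hψ x hx⟩
    · refine ⟨ψ + S j *ᵥ ψ, ?_, ?_⟩
      · intro h
        apply hneg
        have := eq_neg_of_add_eq_zero_right h
        linear_combination (norm := module) this
      · intro x hx
        rcases Finset.mem_insert.1 hx with rfl | hx
        · left
          rw [mulVec_add, mulVec_mulVec, hinv x (Finset.mem_insert_self x I), one_mulVec,
            add_comm]
        · have hc : S x *ᵥ (S j *ᵥ ψ) = S j *ᵥ (S x *ᵥ ψ) := by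
            rw [mulVec_mulVec, mulVec_mulVec,
              hcomm x (Finset.mem_insert_of_mem hx) j (Finset.mem_insert_self j I)]
          rcases hψ x hx with h | h
          · left; rw [mulVec_add, hc, h]
          · right; rw [mulVec_add, hc, h, mulVec_neg]; module

lemma exists_unit_common_eigvec_aux {d : ℕ} (hd : 1 ≤ d) {α : Type*} [DecidableEq α]
    (S : α → Matrix (Fin d) (Fin d) ℂ) (I : Finset α)
    (hinv : ∀ x ∈ I, S x * S x = 1)
    (hcomm : ∀ x ∈ I, ∀ y ∈ I, S x * S y = S y * S x) :
    ∃ ψ : Fin d → ℂ, star ψ ⬝ᵥ ψ = 1 ∧ ∀ x ∈ I, S x *ᵥ ψ = ψ ∨ S x *ᵥ ψ = -ψ := by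
  obtain ⟨ψ, h0, h⟩ := common_eigvec_aux hd S I hinv hcomm
  obtain ⟨c, _, hunit⟩ := normalize_vec_aux h0
  refine ⟨(c:ℂ) • ψ, hunit, fun x hx => ?_⟩
  rcases h x hx with h' | h'
  · left; rw [mulVec_smul, h']
  · right; rw [mulVec_smul, h', smul_neg]

lemma expectation_sq_eigen_aux {d : ℕ} {A : Matrix (Fin d) (Fin d) ℂ} {ψ : Fin d → ℂ}
    (hψ : star ψ ⬝ᵥ ψ = 1) (h : A *ᵥ ψ = ψ ∨ A *ᵥ ψ = -ψ) :
    (expectation A ψ)^2 = 1 := by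
  rcases h with h | h <;> unfold expectation <;> rw [h]
  · rw [hψ]; norm_num
  · rw [dotProduct_neg, hψ]; norm_num

lemma betaSet_bddAbove_aux {W : Type*} [Fintype W] {d : ℕ} {G : SimpleGraph W}
    {S : W → Matrix (Fin d) (Fin d) ℂ} (hS : IsRealization G d S)
    {w : W → ℝ} (hw : ∀ i, 0 ≤ w i) :
    BddAbove {r : ℝ | ∃ ψ : Fin d → ℂ, star ψ ⬝ᵥ ψ = 1 ∧
      r = ∑ i, w i * (expectation (S i) ψ) ^ 2} := by
  refine ⟨∑ i, w i, ?_⟩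
  rintro r ⟨ψ, hψ, rfl⟩
  apply Finset.sum_le_sum
  intro i _
  have h1 := expectation_sq_le_one_aux (hS.1 i) (hS.2.1 i) hψ
  calc w i * expectation (S i) ψ ^ 2 ≤ w i * 1 := mul_le_mul_of_nonneg_left h1 (hw i)
  _ = w i := mul_one _

lemma le_betaVal_aux {W : Type*} [Fintype W] {d : ℕ} {G : SimpleGraph W}
    {S : W → Matrix (Fin d) (Fin d) ℂ} (hS : IsRealization G d S)
    {w : W → ℝ} (hw : ∀ i, 0 ≤ w i) {ψ : Fin d → ℂ} (hψ : star ψ ⬝ᵥ ψ = 1) :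
    ∑ i, w i * (expectation (S i) ψ) ^ 2 ≤ betaVal S w :=
  le_csSup (betaSet_bddAbove_aux hS hw) ⟨ψ, hψ, rfl⟩

lemma alphaSet_bddAbove_aux {W : Type*} [Fintype W] (G : SimpleGraph W)
    {w : W → ℝ} (hw : ∀ i, 0 ≤ w i) :
    BddAbove {r : ℝ | ∃ I : Finset W, IsIndepSet G I ∧ r = ∑ i ∈ I, w i} := by
  refine ⟨∑ i, w i, ?_⟩
  rintro r ⟨I, _, rfl⟩
  exact Finset.sum_le_sum_of_subset_of_nonneg (Finset.subset_univ I) (fun i _ _ => hw i)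

lemma le_alphaW_aux {W : Type*} [Fintype W] {G : SimpleGraph W}
    {w : W → ℝ} (hw : ∀ i, 0 ≤ w i) {I : Finset W} (hI : IsIndepSet G I) :
    ∑ i ∈ I, w i ≤ alphaW G w :=
  le_csSup (alphaSet_bddAbove_aux G hw) ⟨I, hI, rfl⟩

lemma empty_indep_aux {W : Type*} (G : SimpleGraph W) : IsIndepSet G (∅ : Finset W) := by
  intro a ha
  simp at ha

/-- Any realization's beta value dominates the weighted independence number. -/
lemma alphaW_le_betaVal_aux {W : Type*} [Fintype W] [DecidableEq W] {G : SimpleGraph W} {d : ℕ}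
    (hd : 1 ≤ d) {S : W → Matrix (Fin d) (Fin d) ℂ} (hS : IsRealization G d S)
    {w : W → ℝ} (hw : ∀ i, 0 ≤ w i) : alphaW G w ≤ betaVal S w := by
  unfold alphaW
  apply csSup_le
  · exact ⟨0, ∅, empty_indep_aux G, by simp⟩
  rintro s ⟨I, hI, rfl⟩
  obtain ⟨ψ, hψ, hev⟩ := exists_unit_common_eigvec_aux hd S I (fun x _ => hS.2.1 x)
    (fun x hx y hy => by
      by_cases hxy : x = y
      · rw [hxy]
      · exact hS.2.2.2 x y hxy (hI x hx y hy))
  refine le_trans ?_ (le_betaVal_aux hS hw hψ)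
  have h1 : ∑ i ∈ I, w i = ∑ i ∈ I, w i * (expectation (S i) ψ) ^ 2 := by
    apply Finset.sum_congr rfl
    intro i hi
    rw [expectation_sq_eigen_aux hψ (hev i hi), mul_one]
  rw [h1]
  exact Finset.sum_le_sum_of_subset_of_nonneg (Finset.subset_univ I)
    (fun i _ _ => mul_nonneg (hw i) (sq_nonneg _))

/-- Combinatorial half: the weighted independence number is unchanged by copying a vertex. -/
lemma alphaW_copy_aux {V : Type*} [Fintype V] [DecidableEq V] (G : SimpleGraph V) (v : V)
    (G' : SimpleGraph (V ⊕ Unit))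
    (hll : ∀ a b, G'.Adj (Sum.inl a) (Sum.inl b) ↔ G.Adj a b)
    (hnew : ∀ a, G'.Adj (Sum.inl a) (Sum.inr ()) ↔ G.Adj a v)
    (w' : V ⊕ Unit → ℝ) (hw' : ∀ i, 0 ≤ w' i) :
    alphaW G' w' = alphaW G
      (fun i => if i = v then w' (Sum.inl v) + w' (Sum.inr ()) else w' (Sum.inl i)) := by
  set w : V → ℝ := fun i => if i = v then w' (Sum.inl v) + w' (Sum.inr ()) else w' (Sum.inl i)
    with hw
  have hwpos : ∀ i, 0 ≤ w i := by
    intro i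
    by_cases h : i = v <;> simp [hw, h, add_nonneg (hw' _) (hw' _), hw' _]
  apply le_antisymm
  · -- every independent set of G' is dominated by one of G
    unfold alphaW
    apply csSup_le
    · exact ⟨0, ∅, empty_indep_aux G', by simp⟩
    rintro r ⟨I', hI', rfl⟩
    set f : V ⊕ Unit → V := Sum.elim id (fun _ => v) with hf
    set I : Finset V := I'.image f with hI
    have hindep : IsIndepSet G I := by
      intro a ha b hb hadj
      obtain ⟨x, hx, rfl⟩ := Finset.mem_image.1 ha
      obtain ⟨y, hy, rfl⟩ := Finset.mem_image.1 hb
      rcases x with a | ux <;> rcases y with b | uy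
      · exact hI' _ hx _ hy ((hll a b).2 hadj)
      · cases uy
        exact hI' _ hx _ hy ((hnew a).2 hadj)
      · cases ux
        exact hI' _ hy _ hx ((hnew b).2 hadj.symm)
      · cases ux; cases uy
        exact G.irrefl hadj
    refine le_trans ?_ (le_alphaW_aux hwpos hindep)
    rw [← Finset.sum_fiberwise_of_maps_to (g := f) (fun x hx => Finset.mem_image_of_mem f hx) w']
    apply Finset.sum_le_sum
    intro i _
    by_cases hiv : i = v
    · subst hiv
      have hsub : I'.filter (fun x => f x = i) ⊆ {Sum.inl i, Sum.inr ()} := by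
        intro x hx
        rcases x with a | u
        · have : a = i := by simpa [hf] using (Finset.mem_filter.1 hx).2
          simp [this]
        · cases u; simp
      calc ∑ x ∈ I'.filter (fun x => f x = i), w' x
          ≤ ∑ x ∈ ({Sum.inl i, Sum.inr ()} : Finset (V ⊕ Unit)), w' x :=
            Finset.sum_le_sum_of_subset_of_nonneg hsub (fun x _ _ => hw' x)
        _ = w' (Sum.inl i) + w' (Sum.inr ()) := Finset.sum_pair (by simp)
        _ = w i := by simp [hw]
    · have hsub : I'.filter (fun x => f x = i) ⊆ {Sum.inl i} := by
        intro x hx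
        rcases x with a | u
        · have : a = i := by simpa [hf] using (Finset.mem_filter.1 hx).2
          simp [this]
        · cases u
          have : v = i := by simpa [hf] using (Finset.mem_filter.1 hx).2
          exact absurd this.symm hiv
      calc ∑ x ∈ I'.filter (fun x => f x = i), w' x
          ≤ ∑ x ∈ ({Sum.inl i} : Finset (V ⊕ Unit)), w' x :=
            Finset.sum_le_sum_of_subset_of_nonneg hsub (fun x _ _ => hw' x)
        _ = w' (Sum.inl i) := Finset.sum_singleton _ _
        _ = w i := by simp [hw, hiv]
  · -- every independent set of G lifts to one of G' with the same weight
    unfold alphaW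
    apply csSup_le
    · exact ⟨0, ∅, empty_indep_aux G, by simp⟩
    rintro s ⟨I, hI, rfl⟩
    set I' : Finset (V ⊕ Unit) :=
      I.image Sum.inl ∪ (if v ∈ I then {Sum.inr ()} else ∅) with hI'
    have hmem : ∀ x, x ∈ I' ↔ (∃ a ∈ I, Sum.inl a = x) ∨ (v ∈ I ∧ x = Sum.inr ()) := by
      intro x
      by_cases hv : v ∈ I <;> simp [hI', hv, Finset.mem_image] <;> exact or_comm
    have hindep : IsIndepSet G' I' := by
      intro a ha b hb hadj
      rcases (hmem a).1 ha with ⟨i, hi, rfl⟩ | ⟨hv, rfl⟩ <;>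
        rcases (hmem b).1 hb with ⟨j, hj, rfl⟩ | ⟨hv', rfl⟩
      · exact hI i hi j hj ((hll i j).1 hadj)
      · exact hI i hi v hv' ((hnew i).1 hadj)
      · exact hI j hj v hv ((hnew j).1 hadj.symm)
      · exact G'.irrefl hadj
    refine le_trans (le_of_eq ?_) (le_alphaW_aux hw' hindep)
    have hdisj : Disjoint (I.image Sum.inl) (if v ∈ I then {Sum.inr ()} else ∅) := by
      by_cases hv : v ∈ I <;> simp [hv]
    have h1 : ∑ x ∈ I', w' x = (∑ i ∈ I, w' (Sum.inl i)) +
        (if v ∈ I then w' (Sum.inr ()) else 0) := by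
      rw [hI', Finset.sum_union hdisj, Finset.sum_image (fun a _ b _ h => Sum.inl_injective h)]
      congr 1
      by_cases hv : v ∈ I <;> simp [hv]
    rw [h1]
    have h2 : ∀ i ∈ I, w i = w' (Sum.inl i) + (if i = v then w' (Sum.inr ()) else 0) := by
      intro i _
      by_cases h : i = v <;> simp [hw, h]
    rw [Finset.sum_congr rfl h2, Finset.sum_add_distrib, Finset.sum_ite_eq' I v]

/-- Copying a vertex of an ħ-perfect graph yields an ħ-perfect graph: the new vertex is adjacent
exactly to the neighbors of the copied vertex (and not to the copied vertex itself). -/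
theorem stmt_7 {V : Type*} [Fintype V] (G : SimpleGraph V) (v : V)
    (G' : SimpleGraph (V ⊕ Unit))
    (hll : ∀ a b, G'.Adj (Sum.inl a) (Sum.inl b) ↔ G.Adj a b)
    (hnew : ∀ a, G'.Adj (Sum.inl a) (Sum.inr ()) ↔ G.Adj a v)
    (hG : HbarPerfect G) :
    HbarPerfect G' := by
  classical
  intro d hd S' hS' w' hw'
  obtain ⟨hherm, hinv, hanti, hcomm⟩ := hS'
  have hS'' : IsRealization G' d S' := ⟨hherm, hinv, hanti, hcomm⟩
  set w : V → ℝ := fun i => if i = v then w' (Sum.inl v) + w' (Sum.inr ()) else w' (Sum.inl i)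
    with hwdef
  have hwpos : ∀ i, 0 ≤ w i := by
    intro i
    by_cases h : i = v <;> simp [hwdef, h, add_nonneg (hw' _) (hw' _), hw' _]
  have hαα : alphaW G' w' = alphaW G w := alphaW_copy_aux G v G' hll hnew w' hw'
  -- the two projected realizations of G
  set SA : V → Matrix (Fin d) (Fin d) ℂ := fun i => S' (Sum.inl i) with hSAdef
  set SB : V → Matrix (Fin d) (Fin d) ℂ :=
    fun i => if i = v then S' (Sum.inr ()) else S' (Sum.inl i) with hSBdef
  have hSA : IsRealization G d SA := by
    refine ⟨fun i => hherm _, fun i => hinv _, fun i j h => hanti _ _ ((hll i j).2 h),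
      fun i j hne hna => hcomm _ _ (by simp [hne]) (fun h => hna ((hll i j).1 h))⟩
  have hSB : IsRealization G d SB := by
    refine ⟨fun i => ?_, fun i => ?_, fun i j hadj => ?_, fun i j hne hna => ?_⟩
    · by_cases h : i = v <;> simp [hSBdef, h, hherm _]
    · by_cases h : i = v <;> simp [hSBdef, h, hinv _]
    · by_cases hi : i = v <;> by_cases hj : j = v
      · exact absurd (hi ▸ hj ▸ hadj) (G.irrefl)
      · subst hi
        simp only [hSBdef, if_pos rfl, if_neg hj]
        have h := hanti _ _ ((hnew j).2 hadj.symm)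
        rw [h, neg_neg]
      · subst hj
        simp only [hSBdef, if_neg hi, if_pos rfl]
        exact hanti _ _ ((hnew i).2 hadj)
      · simp only [hSBdef, if_neg hi, if_neg hj]
        exact hanti _ _ ((hll i j).2 hadj)
    · by_cases hi : i = v <;> by_cases hj : j = v
      · exact absurd (hi.trans hj.symm) hne
      · subst hi
        simp only [hSBdef, if_pos rfl, if_neg hj]
        exact (hcomm _ _ (by simp) (fun h => (hna ((hnew j).1 h).symm))).symm
      · subst hj
        simp only [hSBdef, if_neg hi, if_pos rfl]
        exact hcomm _ _ (by simp) (fun h => hna ((hnew i).1 h))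
      · simp only [hSBdef, if_neg hi, if_neg hj]
        exact hcomm _ _ (by simp [hne]) (fun h => hna ((hll i j).1 h))
  have hbA : betaVal SA w = alphaW G w := hG d hd SA hSA w hwpos
  have hbB : betaVal SB w = alphaW G w := hG d hd SB hSB w hwpos
  apply le_antisymm
  · -- betaVal S' w' ≤ alphaW G' w'
    obtain ⟨ψ₀, hψ₀⟩ := exists_unit_vec_aux hd
    unfold betaVal
    apply csSup_le
    · exact ⟨∑ x, w' x * (expectation (S' x) ψ₀) ^ 2, ψ₀, hψ₀, rfl⟩
    rintro r ⟨ψ, hψ, rfl⟩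
    set a0 : ℝ := expectation (S' (Sum.inl v)) ψ with ha0
    set b0 : ℝ := expectation (S' (Sum.inr ())) ψ with hb0
    set T : ℝ := ∑ i ∈ Finset.univ.erase v, w' (Sum.inl i) * (expectation (S' (Sum.inl i)) ψ) ^ 2
      with hT
    have hsplit : ∀ g : V → ℝ,
        ∑ i, g i = (∑ i ∈ Finset.univ.erase v, g i) + g v := fun g =>
      (Finset.sum_erase_add Finset.univ g (Finset.mem_univ v)).symm
    have hr : ∑ x, w' x * (expectation (S' x) ψ) ^ 2 =
        T + w' (Sum.inl v) * a0 ^ 2 + w' (Sum.inr ()) * b0 ^ 2 := by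
      rw [Fintype.sum_sum_type, hsplit (fun i => w' (Sum.inl i) * (expectation (S' (Sum.inl i)) ψ) ^ 2)]
      simp [hT, ha0, hb0]
    have hrA : ∑ i, w i * (expectation (SA i) ψ) ^ 2 = T + w v * a0 ^ 2 := by
      rw [hsplit (fun i => w i * (expectation (SA i) ψ) ^ 2)]
      congr 1
      apply Finset.sum_congr rfl
      intro i hi
      have hiv : i ≠ v := (Finset.mem_erase.1 hi).1
      simp [hwdef, hSAdef, hiv]
    have hrB : ∑ i, w i * (expectation (SB i) ψ) ^ 2 = T + w v * b0 ^ 2 := by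
      rw [hsplit (fun i => w i * (expectation (SB i) ψ) ^ 2)]
      congr 1
      · apply Finset.sum_congr rfl
        intro i hi
        have hiv : i ≠ v := (Finset.mem_erase.1 hi).1
        simp [hwdef, hSBdef, hiv]
      · simp [hSBdef, hb0]
    have hwv : w v = w' (Sum.inl v) + w' (Sum.inr ()) := by simp [hwdef]
    rw [hr]
    rw [hαα]
    by_cases hcase : a0 ^ 2 ≤ b0 ^ 2
    · -- use SB
      have h1 : T + w' (Sum.inl v) * a0 ^ 2 + w' (Sum.inr ()) * b0 ^ 2 ≤
          ∑ i, w i * (expectation (SB i) ψ) ^ 2 := by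
        rw [hrB, hwv]
        nlinarith [hw' (Sum.inl v), hw' (Sum.inr ())]
      exact le_trans h1 (le_trans (le_betaVal_aux hSB hwpos hψ) (le_of_eq hbB))
    · -- use SA
      push_neg at hcase
      have h1 : T + w' (Sum.inl v) * a0 ^ 2 + w' (Sum.inr ()) * b0 ^ 2 ≤
          ∑ i, w i * (expectation (SA i) ψ) ^ 2 := by
        rw [hrA, hwv]
        nlinarith [hw' (Sum.inl v), hw' (Sum.inr ())]
      exact le_trans h1 (le_trans (le_betaVal_aux hSA hwpos hψ) (le_of_eq hbA))
  · exact alphaW_le_betaVal_aux hd hS'' hw'
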